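/- Under the stated assumptions, (s_{h_{j+1}}² − s_{h_j}²)/σ_j² = 1 + O(B_j^{−δ/4}·(log B_j)^{1/2}) as j → ∞, and s_{h_{M+1}}² − Σ_{j=1}^M σ_j² = O(B_M^{1−δ/8}·(log B_M)^{1/2}) as M → ∞. -/

import Mathlib

open MeasureTheory Filter Real Set Topology Asymptotics

noncomputable section

/-- The `{+1,−1}`-valued Markov chain of the elephant random walk remembering the very
recent past, with memory parameter `p`: `X_1` is a symmetric sign and each step keeps the
previous sign with probability `p`.  The law is specified through all finite-dimensional
distributions. -/
def IsERWChain {Ω : Type*} [MeasurableSpace Ω] (P : Measure Ω) (p : ℝ)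
    (X : ℕ → Ω → ℝ) : Prop :=
  (∀ k, Measurable (X k)) ∧
  (∀ k ω, X k ω = 1 ∨ X k ω = -1) ∧
  (∀ (n : ℕ) (ε : ℕ → ℝ), (∀ i, ε i = 1 ∨ ε i = -1) →
    P {ω | ∀ i ≤ n, X (i + 1) ω = ε i} =
      ENNReal.ofReal
        ((1 / 2) * ∏ i ∈ Finset.range n, (if ε (i + 1) = ε i then p else 1 - p)))

/-- `S_n = Σ_{k=1}^n a_k X_k`, the ERWVRP with variable step length. -/
def Swalk {Ω : Type*} (a : ℕ → ℝ) (X : ℕ → Ω → ℝ) (n : ℕ) (ω : Ω) : ℝ :=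
  ∑ k ∈ Finset.Icc 1 n, a k * X k ω

/-- `A_n = Σ_{k=1}^n a_k²` -/
def Asum (a : ℕ → ℝ) (n : ℕ) : ℝ := ∑ k ∈ Finset.Icc 1 n, (a k) ^ 2

/-- `s_n² = E[S_n²]` -/
def sn2 {Ω : Type*} [MeasurableSpace Ω] (P : Measure Ω) (a : ℕ → ℝ)
    (X : ℕ → Ω → ℝ) (n : ℕ) : ℝ :=
  ∫ ω, (Swalk a X n ω) ^ 2 ∂P

/-- a standard Brownian motion on a probability space -/
structure IsStdBM {Ω : Type*} [MeasurableSpace Ω] (P : Measure Ω) (B : ℝ → Ω → ℝ) : Prop where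
  meas : ∀ t, Measurable (B t)
  zero : ∀ᵐ ω ∂P, B 0 ω = 0
  cont : ∀ᵐ ω ∂P, Continuous fun t => B t ω
  gauss : ∀ s t : ℝ, 0 ≤ s → s ≤ t →
    P.map (fun ω => B t ω - B s ω) = ProbabilityTheory.gaussianReal 0 ((t - s).toNNReal)
  indep : ∀ (n : ℕ) (ts : Fin (n + 1) → ℝ), Monotone ts → (∀ i, 0 ≤ ts i) →
    ProbabilityTheory.iIndepFun
      (fun i : Fin n => fun ω => B (ts i.succ) ω - B (ts i.castSucc) ω) P

end

noncomputable section

/-- the block sum `Y_j = Σ_{k ∈ (h_j, h_{j+1}]} a_k X_k` -/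
def blockY {Ω : Type*} (a : ℕ → ℝ) (X : ℕ → Ω → ℝ) (h : ℕ → ℕ) (j : ℕ) (ω : Ω) : ℝ :=
  ∑ k ∈ Finset.Icc (h j + 1) (h (j + 1)), a k * X k ω

/-- `σ_j² = E[Y_j²]` -/
def blockVar {Ω : Type*} [MeasurableSpace Ω] (P : Measure Ω) (a : ℕ → ℝ)
    (X : ℕ → Ω → ℝ) (h : ℕ → ℕ) (j : ℕ) : ℝ :=
  ∫ ω, (blockY a X h j ω) ^ 2 ∂P

/-- the hypothesis that `h` is the blocking sequence: `h_1 = 0` and `h_{n+1}` is the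
smallest integer `H` (beyond `h_n`) with `A_H − A_{h_n} ≥ A_{h_n}^{1−δ/2}` -/
def IsBlocking (a : ℕ → ℝ) (δ : ℝ) (h : ℕ → ℕ) : Prop :=
  h 1 = 0 ∧
  ∀ n, 1 ≤ n →
    IsLeast {H : ℕ | h n < H ∧ Asum a (h n) ^ (1 - δ / 2) ≤ Asum a H - Asum a (h n)}
      (h (n + 1))

end

noncomputable section

namespace ERWaux

def eps (S : Finset ℕ) : ℕ → ℝ := fun i => if i ∈ S then 1 else -1

def muu (p : ℝ) (n : ℕ) (S : Finset ℕ) : ℝ :=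
  (1 / 2) * ∏ i ∈ Finset.range n, (if eps S (i + 1) = eps S i then p else 1 - p)

lemma eps_pm (S : Finset ℕ) (i : ℕ) : eps S i = 1 ∨ eps S i = -1 := by
  unfold eps; split <;> simp

lemma eps_eq_one_iff {S : Finset ℕ} {i : ℕ} : eps S i = 1 ↔ i ∈ S := by
  unfold eps; split <;> simp_all
  norm_num

lemma muu_nonneg {p : ℝ} (hp : p ∈ Set.Ioo (0:ℝ) 1) (n : ℕ) (S : Finset ℕ) :
    0 ≤ muu p n S := by
  unfold muu
  apply mul_nonneg (by norm_num)
  apply Finset.prod_nonneg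
  intro i _
  split
  · exact hp.1.le
  · linarith [hp.2]

variable {Ω : Type*} [MeasurableSpace Ω] {P : Measure Ω} [IsProbabilityMeasure P]
  {p : ℝ} {X : ℕ → Ω → ℝ}

lemma integral_eq_sum (hX : IsERWChain P p X) (hp : p ∈ Set.Ioo (0:ℝ) 1) (n : ℕ)
    (g : (ℕ → ℝ) → ℝ)
    (hg : ∀ f f' : ℕ → ℝ, (∀ i ≤ n, f i = f' i) → g f = g f') :
    ∫ ω, g (fun i => X (i + 1) ω) ∂P
      = ∑ S ∈ (Finset.range (n + 1)).powerset, g (eps S) * muu p n S := by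
  classical
  set Cyl : Finset ℕ → Set Ω := fun S => {ω | ∀ i ≤ n, X (i + 1) ω = eps S i} with hCyl
  have hmeas : ∀ S, MeasurableSet (Cyl S) := by
    intro S
    have : Cyl S = ⋂ i, ⋂ (_ : i ≤ n), (X (i + 1)) ⁻¹' {eps S i} := by
      ext ω; simp [hCyl]
    rw [this]
    exact MeasurableSet.iInter fun i => MeasurableSet.iInter fun _ =>
      (hX.1 _) (measurableSet_singleton _)
  have hpt : ∀ ω, g (fun i => X (i + 1) ω)
      = ∑ S ∈ (Finset.range (n + 1)).powerset,
          Set.indicator (Cyl S) (fun _ => g (eps S)) ω := by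
    intro ω
    set T := (Finset.range (n + 1)).filter (fun i => X (i + 1) ω = 1) with hT
    have hTmem : T ∈ (Finset.range (n + 1)).powerset :=
      Finset.mem_powerset.2 (Finset.filter_subset _ _)
    have hepsT : ∀ i ≤ n, eps T i = X (i + 1) ω := by
      intro i hi
      rcases hX.2.1 (i + 1) ω with h1 | h1
      · have : i ∈ T := by
          rw [hT]; exact Finset.mem_filter.2 ⟨Finset.mem_range.2 (Nat.lt_succ_of_le hi), h1⟩
        rw [h1, eps_eq_one_iff.2 this]
      · have : i ∉ T := by
          rw [hT]; intro hc
          have := (Finset.mem_filter.1 hc).2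
          rw [h1] at this; norm_num at this
        rw [h1]; unfold eps; rw [if_neg this]
    rw [Finset.sum_eq_single_of_mem T hTmem]
    · have hωT : ω ∈ Cyl T := by
        intro i hi; exact (hepsT i hi).symm
      rw [Set.indicator_of_mem hωT]
      exact hg _ _ (fun i hi => (hepsT i hi).symm)
    · intro S hS hne
      apply Set.indicator_of_notMem
      intro hωS
      apply hne
      have hSsub := Finset.mem_powerset.1 hS
      ext i
      constructor
      · intro hiS
        have hir : i ∈ Finset.range (n + 1) := hSsub hiS
        have hile : i ≤ n := Nat.lt_succ_iff.1 (Finset.mem_range.1 hir)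
        have := hωS i hile
        rw [eps_eq_one_iff.2 hiS] at this
        exact Finset.mem_filter.2 ⟨hir, this⟩
      · intro hiT
        rcases Finset.mem_filter.1 hiT with ⟨hir, hX1⟩
        have hile : i ≤ n := Nat.lt_succ_iff.1 (Finset.mem_range.1 hir)
        have := hωS i hile
        rw [hX1] at this
        by_contra hiS
        unfold eps at this
        rw [if_neg hiS] at this
        norm_num at this
  calc ∫ ω, g (fun i => X (i + 1) ω) ∂P
      = ∫ ω, ∑ S ∈ (Finset.range (n + 1)).powerset,
          Set.indicator (Cyl S) (fun _ => g (eps S)) ω ∂P := by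
        congr 1; exact funext hpt
    _ = ∑ S ∈ (Finset.range (n + 1)).powerset,
          ∫ ω, Set.indicator (Cyl S) (fun _ => g (eps S)) ω ∂P := by
        apply integral_finset_sum
        intro S _
        exact (integrable_const _).indicator (hmeas S)
    _ = ∑ S ∈ (Finset.range (n + 1)).powerset, g (eps S) * muu p n S := by
        apply Finset.sum_congr rfl
        intro S _
        rw [integral_indicator_const _ (hmeas S)]
        have : P (Cyl S) = ENNReal.ofReal (muu p n S) := hX.2.2 n (eps S) (eps_pm S)
        rw [measureReal_def, this, ENNReal.toReal_ofReal (muu_nonneg hp n S), smul_eq_mul, mul_comm]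

end ERWaux

namespace ERWaux

lemma eps_insert {k j : ℕ} (S : Finset ℕ) (h : j ≠ k) :
    eps (insert k S) j = eps S j := by
  unfold eps
  simp [Finset.mem_insert, h]

lemma muu_succ (p : ℝ) (n : ℕ) (S : Finset ℕ) :
    muu p (n + 1) S = muu p n S * (if eps S (n + 1) = eps S n then p else 1 - p) := by
  unfold muu
  rw [Finset.prod_range_succ, mul_assoc]

lemma muu_insert (p : ℝ) (n : ℕ) (S : Finset ℕ) :
    muu p n (insert (n + 1) S) = muu p n S := by
  unfold muu
  congr 1
  apply Finset.prod_congr rfl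
  intro i hi
  have hi' : i < n := Finset.mem_range.1 hi
  rw [eps_insert S (by omega), eps_insert S (by omega)]

lemma alg_step {p : ℝ} (n : ℕ) (g : (ℕ → ℝ) → ℝ)
    (hg : ∀ f f' : ℕ → ℝ, (∀ i ≤ n, f i = f' i) → g f = g f') :
    ∑ S ∈ (Finset.range (n + 2)).powerset, g (eps S) * eps S (n + 1) * muu p (n + 1) S
      = (2 * p - 1) *
        ∑ S ∈ (Finset.range (n + 1)).powerset, g (eps S) * eps S n * muu p n S := by
  classical
  have hr : Finset.range (n + 2) = insert (n + 1) (Finset.range (n + 1)) :=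
    Finset.range_add_one
  rw [hr, Finset.sum_powerset_insert (by simp), ← Finset.sum_add_distrib, Finset.mul_sum]
  apply Finset.sum_congr rfl
  intro S hS
  have hSsub : S ⊆ Finset.range (n + 1) := Finset.mem_powerset.1 hS
  have hnot : (n + 1) ∉ S := fun hc => by simpa using Finset.mem_range.1 (hSsub hc)
  have hgi : g (eps (insert (n + 1) S)) = g (eps S) := by
    apply hg
    intro i hi
    exact eps_insert S (by omega)
  have he1 : eps S (n + 1) = -1 := by unfold eps; rw [if_neg hnot]
  have he2 : eps (insert (n + 1) S) (n + 1) = 1 := by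
    unfold eps; rw [if_pos (Finset.mem_insert_self _ _)]
  have he3 : eps (insert (n + 1) S) n = eps S n := eps_insert S (by omega)
  rw [muu_succ, muu_succ, muu_insert, hgi, he1, he2, he3]
  rcases eps_pm S n with h | h <;> rw [h] <;>
    · norm_num
      ring

lemma alg_marg {p : ℝ} (n : ℕ) (g : (ℕ → ℝ) → ℝ)
    (hg : ∀ f f' : ℕ → ℝ, (∀ i ≤ n, f i = f' i) → g f = g f') :
    ∑ S ∈ (Finset.range (n + 2)).powerset, g (eps S) * muu p (n + 1) S
      = ∑ S ∈ (Finset.range (n + 1)).powerset, g (eps S) * muu p n S := by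
  classical
  have hr : Finset.range (n + 2) = insert (n + 1) (Finset.range (n + 1)) :=
    Finset.range_add_one
  rw [hr, Finset.sum_powerset_insert (by simp), ← Finset.sum_add_distrib]
  apply Finset.sum_congr rfl
  intro S hS
  have hSsub : S ⊆ Finset.range (n + 1) := Finset.mem_powerset.1 hS
  have hnot : (n + 1) ∉ S := fun hc => by simpa using Finset.mem_range.1 (hSsub hc)
  have hgi : g (eps (insert (n + 1) S)) = g (eps S) := by
    apply hg
    intro i hi
    exact eps_insert S (by omega)
  have he1 : eps S (n + 1) = -1 := by unfold eps; rw [if_neg hnot]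
  have he2 : eps (insert (n + 1) S) (n + 1) = 1 := by
    unfold eps; rw [if_pos (Finset.mem_insert_self _ _)]
  have he3 : eps (insert (n + 1) S) n = eps S n := eps_insert S (by omega)
  rw [muu_succ, muu_succ, muu_insert, hgi, he1, he2, he3]
  rcases eps_pm S n with h | h <;> rw [h] <;>
    · norm_num
      ring

lemma alg_total (p : ℝ) (n : ℕ) :
    ∑ S ∈ (Finset.range (n + 1)).powerset, muu p n S = 1 := by
  classical
  induction n with
  | zero =>
      rw [show Finset.range 1 = insert 0 (∅ : Finset ℕ) from rfl,
        Finset.sum_powerset_insert (by simp), Finset.powerset_empty,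
        Finset.sum_singleton, Finset.sum_singleton]
      unfold muu
      norm_num
  | succ n ih =>
      have h2 := alg_marg (p := p) n (fun _ => 1) (fun _ _ _ => rfl)
      simp only [one_mul] at h2
      rw [h2]
      exact ih

variable {Ω : Type*} [MeasurableSpace Ω] {P : Measure Ω} [IsProbabilityMeasure P]
  {p : ℝ} {X : ℕ → Ω → ℝ}

lemma EXX (hX : IsERWChain P p X) (hp : p ∈ Set.Ioo (0:ℝ) 1) (m d : ℕ) :
    ∫ ω, X (m + 1) ω * X (m + 1 + d) ω ∂P = (2 * p - 1) ^ d := by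
  induction d with
  | zero =>
      have hpt : (fun ω => X (m + 1) ω * X (m + 1 + 0) ω) = fun _ => (1 : ℝ) := by
        funext ω
        rcases hX.2.1 (m + 1) ω with h | h <;> simp [h]
      rw [hpt, integral_const, measureReal_def, measure_univ]
      simp
  | succ d ih =>
      have hg1 : ∀ f f' : ℕ → ℝ, (∀ i ≤ m + d + 1, f i = f' i) →
          (fun f : ℕ → ℝ => f m * f (m + d + 1)) f = (fun f : ℕ → ℝ => f m * f (m + d + 1)) f' := by
        intro f f' hf
        simp only []
        rw [hf m (by omega), hf (m + d + 1) (by omega)]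
      have h1 := integral_eq_sum hX hp (m + d + 1) (fun f => f m * f (m + d + 1)) hg1
      have hg2 : ∀ f f' : ℕ → ℝ, (∀ i ≤ m + d, f i = f' i) →
          (fun f : ℕ → ℝ => f m) f = (fun f : ℕ → ℝ => f m) f' := by
        intro f f' hf
        exact hf m (by omega)
      have h2 := alg_step (p := p) (m + d) (fun f => f m) hg2
      have hg3 : ∀ f f' : ℕ → ℝ, (∀ i ≤ m + d, f i = f' i) →
          (fun f : ℕ → ℝ => f m * f (m + d)) f = (fun f : ℕ → ℝ => f m * f (m + d)) f' := by
        intro f f' hf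
        simp only []
        rw [hf m (by omega), hf (m + d) (by omega)]
      have h3 := integral_eq_sum hX hp (m + d) (fun f => f m * f (m + d)) hg3
      have e1 : m + 1 + (d + 1) = m + d + 1 + 1 := by omega
      have e2 : m + 1 + d = m + d + 1 := by omega
      simp only [] at h1 h2 h3
      rw [e1, show (2 * p - 1) ^ (d + 1) = (2 * p - 1) * (2 * p - 1) ^ d by ring]
      rw [e2] at ih
      rw [show m + d + 1 + 1 = m + d + 2 from rfl] at h1
      rw [h1, h2, ← ih, ← h3]

def rr (p : ℝ) (k l : ℕ) : ℝ := (2 * p - 1) ^ (max k l - min k l)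

lemma rr_symm (p : ℝ) (k l : ℕ) : rr p k l = rr p l k := by
  unfold rr; rw [max_comm, min_comm]

lemma Epair (hX : IsERWChain P p X) (hp : p ∈ Set.Ioo (0:ℝ) 1) {k l : ℕ}
    (hk : 1 ≤ k) (hl : 1 ≤ l) : ∫ ω, X k ω * X l ω ∂P = rr p k l := by
  rcases le_total k l with hkl | hkl
  · have e1 : k = (k - 1) + 1 := by omega
    have e2 : l = (k - 1) + 1 + (l - k) := by omega
    have := EXX hX hp (k - 1) (l - k)
    rw [show k - 1 + 1 = k by omega, show k + (l - k) = l by omega] at this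
    rw [this]
    unfold rr
    congr 1
    omega
  · have e1 : l = (l - 1) + 1 := by omega
    have e2 : k = (l - 1) + 1 + (k - l) := by omega
    have := EXX hX hp (l - 1) (k - l)
    rw [show l - 1 + 1 = l by omega, show l + (k - l) = k by omega] at this
    simp_rw [mul_comm (X k _)]
    rw [this]
    unfold rr
    congr 1
    omega

lemma integrable_XX (hX : IsERWChain P p X) (k l : ℕ) :
    Integrable (fun ω => X k ω * X l ω) P := by
  apply Integrable.mono' (integrable_const (1 : ℝ))
  · exact ((hX.1 k).mul (hX.1 l)).aestronglyMeasurable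
  · apply ae_of_all
    intro ω
    rcases hX.2.1 k ω with h1 | h1 <;> rcases hX.2.1 l ω with h2 | h2 <;>
      simp [h1, h2]

lemma integral_sum_mul_sum (hX : IsERWChain P p X) (F G : Finset ℕ) (b c : ℕ → ℝ) :
    ∫ ω, (∑ k ∈ F, b k * X k ω) * (∑ l ∈ G, c l * X l ω) ∂P
      = ∑ k ∈ F, ∑ l ∈ G, b k * c l * ∫ ω, X k ω * X l ω ∂P := by
  have heq : ∀ k l : ℕ, (fun ω => (b k * X k ω) * (c l * X l ω))
      = fun ω => (b k * c l) * (X k ω * X l ω) := by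
    intro k l; funext ω; ring
  have hint : ∀ k l : ℕ, Integrable (fun ω => (b k * X k ω) * (c l * X l ω)) P := by
    intro k l; rw [heq]; exact (integrable_XX hX k l).const_mul _
  have hpt : (fun ω => (∑ k ∈ F, b k * X k ω) * (∑ l ∈ G, c l * X l ω))
      = fun ω => ∑ k ∈ F, ∑ l ∈ G, (b k * X k ω) * (c l * X l ω) := by
    funext ω; rw [Finset.sum_mul_sum]
  rw [hpt, integral_finset_sum F (fun k _ =>
    integrable_finset_sum G (fun l _ => hint k l))]
  apply Finset.sum_congr rfl
  intro k _
  rw [integral_finset_sum G (fun l _ => hint k l)]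
  apply Finset.sum_congr rfl
  intro l _
  rw [heq, integral_const_mul]

end ERWaux

namespace ERWaux

variable {Ω : Type*} [MeasurableSpace Ω] {P : Measure Ω} [IsProbabilityMeasure P]
  {p : ℝ} {X : ℕ → Ω → ℝ}

/-- double-sum expression for `E[(Σ_{k∈F} a_k X_k)(Σ_{l∈G} a_l X_l)]` -/
lemma integral_sumXX (hX : IsERWChain P p X) (hp : p ∈ Set.Ioo (0:ℝ) 1)
    (a : ℕ → ℝ) (F G : Finset ℕ) (hF : ∀ k ∈ F, 1 ≤ k) (hG : ∀ l ∈ G, 1 ≤ l) :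
    ∫ ω, (∑ k ∈ F, a k * X k ω) * (∑ l ∈ G, a l * X l ω) ∂P
      = ∑ k ∈ F, ∑ l ∈ G, a k * a l * rr p k l := by
  rw [integral_sum_mul_sum hX F G a a]
  apply Finset.sum_congr rfl
  intro k hk
  apply Finset.sum_congr rfl
  intro l hl
  rw [Epair hX hp (hF k hk) (hG l hl)]

lemma sn2_eq (hX : IsERWChain P p X) (hp : p ∈ Set.Ioo (0:ℝ) 1) (a : ℕ → ℝ) (n : ℕ) :
    sn2 P a X n = ∑ k ∈ Finset.Icc 1 n, ∑ l ∈ Finset.Icc 1 n, a k * a l * rr p k l := by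
  unfold sn2
  rw [← integral_sumXX hX hp a _ _ (fun k hk => (Finset.mem_Icc.1 hk).1)
    (fun l hl => (Finset.mem_Icc.1 hl).1)]
  apply integral_congr_ae
  apply ae_of_all
  intro ω
  simp [Swalk, sq]

lemma blockVar_eq (hX : IsERWChain P p X) (hp : p ∈ Set.Ioo (0:ℝ) 1)
    (a : ℕ → ℝ) (h : ℕ → ℕ) (j : ℕ) :
    blockVar P a X h j = ∑ k ∈ Finset.Icc (h j + 1) (h (j + 1)),
      ∑ l ∈ Finset.Icc (h j + 1) (h (j + 1)), a k * a l * rr p k l := by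
  unfold blockVar
  rw [← integral_sumXX hX hp a _ _ (fun k hk => le_trans (by omega) (Finset.mem_Icc.1 hk).1)
    (fun l hl => le_trans (by omega) (Finset.mem_Icc.1 hl).1)]
  apply integral_congr_ae
  apply ae_of_all
  intro ω
  simp [blockY, sq]

end ERWaux

namespace ERWaux

def cvf (r : ℝ) (a : ℕ → ℝ) (v m : ℕ) : ℝ := ∑ k ∈ Finset.Icc m v, a k * r ^ (k - m)

def Qf (r : ℝ) (a : ℕ → ℝ) (v s : ℕ) : ℝ :=
  ∑ k ∈ Finset.Icc s v, ∑ l ∈ Finset.Icc s v, a k * a l * r ^ (max k l - min k l)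

lemma cvf_of_gt {r : ℝ} {a : ℕ → ℝ} {v m : ℕ} (h : v < m) : cvf r a v m = 0 := by
  unfold cvf
  rw [Finset.Icc_eq_empty (by omega)]
  rfl

lemma shift_sum (r : ℝ) (b : ℕ → ℝ) (v m : ℕ) :
    ∑ k ∈ Finset.Icc (m + 1) v, b k * r ^ (k - m)
      = r * ∑ k ∈ Finset.Icc (m + 1) v, b k * r ^ (k - (m + 1)) := by
  rw [Finset.mul_sum]
  apply Finset.sum_congr rfl
  intro k hk
  have hk' := (Finset.mem_Icc.1 hk).1
  rw [show k - m = (k - (m + 1)) + 1 by omega, pow_succ]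
  ring

lemma cvf_rec {r : ℝ} {a : ℕ → ℝ} {v m : ℕ} (h : m ≤ v) :
    cvf r a v m = a m + r * cvf r a v (m + 1) := by
  unfold cvf
  rw [Finset.Icc_eq_cons_Ioc h, Finset.sum_cons, ← Finset.Icc_add_one_left_eq_Ioc]
  simp only [Nat.sub_self, pow_zero, mul_one]
  rw [shift_sum]

lemma Qf_eq (r : ℝ) (a : ℕ → ℝ) (v : ℕ) : ∀ s,
    Qf r a v s = (cvf r a v s) ^ 2
      + (1 - r ^ 2) * ∑ m ∈ Finset.Icc (s + 1) v, (cvf r a v m) ^ 2 := by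
  suffices H : ∀ d s, v + 1 - s ≤ d → Qf r a v s = (cvf r a v s) ^ 2
      + (1 - r ^ 2) * ∑ m ∈ Finset.Icc (s + 1) v, (cvf r a v m) ^ 2 by
    intro s; exact H (v + 1 - s) s le_rfl
  intro d
  induction d with
  | zero =>
      intro s hs
      have hv : v < s := by omega
      unfold Qf
      rw [Finset.Icc_eq_empty (by omega), cvf_of_gt hv,
        Finset.Icc_eq_empty (by omega)]
      simp
  | succ d ih =>
      intro s hs
      by_cases hsv : s ≤ v
      · have hcross1 : ∑ l ∈ Finset.Icc (s+1) v, a s * a l * r ^ (max s l - min s l)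
            = a s * (r * cvf r a v (s+1)) := by
          have hc : ∀ l ∈ Finset.Icc (s+1) v,
              a s * a l * r ^ (max s l - min s l) = (a s * a l) * r ^ (l - s) := by
            intro l hl
            have hl' := (Finset.mem_Icc.1 hl).1
            rw [max_eq_right (by omega), min_eq_left (by omega)]
          rw [Finset.sum_congr rfl hc, shift_sum r (fun l => a s * a l) v s]
          unfold cvf
          rw [Finset.mul_sum, Finset.mul_sum, Finset.mul_sum]
          apply Finset.sum_congr rfl
          intro l _
          ring
        have hcross2 : ∑ x ∈ Finset.Icc (s+1) v, a x * a s * r ^ (max x s - min x s)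
            = a s * (r * cvf r a v (s+1)) := by
          have hc : ∀ x ∈ Finset.Icc (s+1) v,
              a x * a s * r ^ (max x s - min x s) = (a s * a x) * r ^ (x - s) := by
            intro x hx
            have hx' := (Finset.mem_Icc.1 hx).1
            rw [max_eq_left (by omega), min_eq_right (by omega), mul_comm (a x) (a s)]
          rw [Finset.sum_congr rfl hc, shift_sum r (fun l => a s * a l) v s]
          unfold cvf
          rw [Finset.mul_sum, Finset.mul_sum, Finset.mul_sum]
          apply Finset.sum_congr rfl
          intro l _
          ring
        have hQ : Qf r a v s
            = a s ^ 2 + 2 * (a s * (r * cvf r a v (s + 1))) + Qf r a v (s + 1) := by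
          have hnot : s ∉ Finset.Icc (s+1) v := by simp
          have hins : Finset.Icc s v = insert s (Finset.Icc (s+1) v) := by
            ext k; simp only [Finset.mem_Icc, Finset.mem_insert]; omega
          unfold Qf
          rw [hins]
          simp only [Finset.sum_insert hnot]
          rw [Finset.sum_add_distrib, hcross1, hcross2]
          have e0 : a s * a s * r ^ (max s s - min s s) = a s ^ 2 := by
            simp [sq]
          rw [e0]
          ring
        have hsplit : ∑ m ∈ Finset.Icc (s + 1) v, (cvf r a v m) ^ 2
            = (cvf r a v (s + 1)) ^ 2 + ∑ m ∈ Finset.Icc (s + 2) v, (cvf r a v m) ^ 2 := by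
          rcases Nat.lt_or_ge v (s + 1) with hv | hv
          · rw [Finset.Icc_eq_empty (by omega), Finset.Icc_eq_empty (by omega),
              cvf_of_gt hv]
            simp
          · have hnot : s + 1 ∉ Finset.Icc (s+2) v := by simp
            have hins : Finset.Icc (s+1) v = insert (s+1) (Finset.Icc (s+2) v) := by
              ext k; simp only [Finset.mem_Icc, Finset.mem_insert]; omega
            rw [hins, Finset.sum_insert hnot]
        have hcs : cvf r a v s = a s + r * cvf r a v (s + 1) := cvf_rec hsv
        have ihs := ih (s + 1) (by omega)
        rw [hQ, ihs, hcs, hsplit]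
        ring
      · have hv : v < s := by omega
        unfold Qf
        rw [Finset.Icc_eq_empty (by omega), cvf_of_gt hv,
          Finset.Icc_eq_empty (by omega)]
        simp

end ERWaux

namespace ERWaux

lemma geom_aux {x : ℝ} (hx0 : 0 ≤ x) (hx1 : x < 1) (F : Finset ℕ) (e : ℕ → ℕ)
    (he : Set.InjOn e F) : ∑ k ∈ F, x ^ (e k) ≤ 1 / (1 - x) := by
  have h1 : ∑ k ∈ F, x ^ (e k) = ∑ i ∈ F.image e, x ^ i :=
    (Finset.sum_image (fun a ha b hb hab => he ha hb hab)).symm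
  set N := (F.image e).sup id + 1 with hN
  have hsub : F.image e ⊆ Finset.range N := by
    intro i hi
    rw [Finset.mem_range, hN]
    exact Nat.lt_succ_of_le (Finset.le_sup (f := id) hi)
  have h2 : ∑ i ∈ F.image e, x ^ i ≤ ∑ i ∈ Finset.range N, x ^ i :=
    Finset.sum_le_sum_of_subset_of_nonneg hsub (fun i _ _ => pow_nonneg hx0 i)
  have h3 : ∑ i ∈ Finset.range N, x ^ i ≤ 1 / (1 - x) := by
    have hgm := geom_sum_mul x N
    have h1x : 0 < 1 - x := by linarith
    rw [le_div_iff₀ h1x]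
    have : (∑ i ∈ Finset.range N, x ^ i) * (1 - x) = 1 - x ^ N := by
      have := geom_sum_mul x N
      nlinarith [this]
    rw [this]
    have : 0 ≤ x ^ N := pow_nonneg hx0 N
    linarith
  linarith [h1, h2, h3]

/-- bound `|Σ_{k∈F} a_k r^{e k}| ≤ amax/(1-|r|)` -/
lemma weighted_geom_aux {r : ℝ} (hr : |r| < 1) (F : Finset ℕ) (e : ℕ → ℕ)
    (he : Set.InjOn e F) (a : ℕ → ℝ) (amax : ℝ) (hamax : 0 ≤ amax)
    (ha : ∀ k ∈ F, |a k| ≤ amax) :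
    |∑ k ∈ F, a k * r ^ (e k)| ≤ amax * (1 / (1 - |r|)) := by
  calc |∑ k ∈ F, a k * r ^ (e k)| ≤ ∑ k ∈ F, |a k * r ^ (e k)| :=
        Finset.abs_sum_le_sum_abs _ _
    _ ≤ ∑ k ∈ F, amax * |r| ^ (e k) := by
        apply Finset.sum_le_sum
        intro k hk
        rw [abs_mul, abs_pow]
        exact mul_le_mul_of_nonneg_right (ha k hk) (pow_nonneg (abs_nonneg r) _)
    _ = amax * ∑ k ∈ F, |r| ^ (e k) := by rw [Finset.mul_sum]
    _ ≤ amax * (1 / (1 - |r|)) :=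
        mul_le_mul_of_nonneg_left (geom_aux (abs_nonneg r) hr F e he) hamax

end ERWaux

namespace ERWaux

lemma cross_eq (r : ℝ) (a : ℕ → ℝ) (u v : ℕ) :
    ∑ k ∈ Finset.Icc 1 u, ∑ l ∈ Finset.Icc (u+1) v, a k * a l * r ^ (max k l - min k l)
      = (∑ k ∈ Finset.Icc 1 u, a k * r ^ (u + 1 - k)) * cvf r a v (u + 1) := by
  rw [Finset.sum_mul]
  apply Finset.sum_congr rfl
  intro k hk
  rcases Finset.mem_Icc.1 hk with ⟨hk1, hku⟩
  unfold cvf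
  rw [Finset.mul_sum]
  apply Finset.sum_congr rfl
  intro l hl
  rcases Finset.mem_Icc.1 hl with ⟨hl1, hlv⟩
  rw [max_eq_right (by omega), min_eq_left (by omega),
    show l - k = (u + 1 - k) + (l - (u + 1)) by omega, pow_add]
  ring

lemma cvf_abs_le {r : ℝ} (hr : |r| < 1) (a : ℕ → ℝ) (v m : ℕ) (amax : ℝ)
    (hamax : 0 ≤ amax) (ha : ∀ k ∈ Finset.Icc m v, |a k| ≤ amax) :
    |cvf r a v m| ≤ amax * (1 / (1 - |r|)) := by
  apply weighted_geom_aux hr _ (fun k => k - m) _ a amax hamax ha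
  intro x hx y hy hxy
  simp only [Finset.coe_Icc, Set.mem_Icc] at hx hy
  have hxy' : x - m = y - m := hxy
  omega

lemma cross_abs_le {r : ℝ} (hr : |r| < 1) (a : ℕ → ℝ) (u v : ℕ) (amax : ℝ)
    (hamax : 0 ≤ amax) (ha : ∀ k ∈ Finset.Icc 1 v, |a k| ≤ amax) (huv : u ≤ v) :
    |∑ k ∈ Finset.Icc 1 u, ∑ l ∈ Finset.Icc (u+1) v, a k * a l * r ^ (max k l - min k l)|
      ≤ (amax * (1 / (1 - |r|))) ^ 2 := by
  rw [cross_eq, abs_mul, sq]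
  have h1 : |∑ k ∈ Finset.Icc 1 u, a k * r ^ (u + 1 - k)| ≤ amax * (1 / (1 - |r|)) := by
    apply weighted_geom_aux hr _ (fun k => u + 1 - k) _ a amax hamax
    · intro k hk
      apply ha
      rcases Finset.mem_Icc.1 hk with ⟨h1, h2⟩
      exact Finset.mem_Icc.2 ⟨h1, le_trans h2 huv⟩
    · intro x hx y hy hxy
      simp only [Finset.coe_Icc, Set.mem_Icc] at hx hy
      have hxy' : u + 1 - x = u + 1 - y := hxy
      omega
  have h2 : |cvf r a v (u + 1)| ≤ amax * (1 / (1 - |r|)) := by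
    apply cvf_abs_le hr a v (u+1) amax hamax
    intro k hk
    apply ha
    rcases Finset.mem_Icc.1 hk with ⟨h1, h2⟩
    exact Finset.mem_Icc.2 ⟨by omega, h2⟩
  exact mul_le_mul h1 h2 (abs_nonneg _) (le_trans (abs_nonneg _) h1)

lemma Qf_lower {r : ℝ} (hr : |r| < 1) (a : ℕ → ℝ) (v s : ℕ) :
    (1 - r ^ 2) / (2 * (1 + r ^ 2)) * ∑ k ∈ Finset.Icc s v, (a k) ^ 2 ≤ Qf r a v s := by
  have hr2 : r ^ 2 < 1 := by
    nlinarith [abs_nonneg r, sq_abs r, hr]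
  have hden : (0:ℝ) < 2 * (1 + r ^ 2) := by nlinarith [sq_nonneg r]
  rcases Nat.lt_or_ge v s with hvs | hsv
  · unfold Qf
    rw [Finset.Icc_eq_empty (by omega)]
    simp
  -- main case
  have hQ := Qf_eq r a v s
  set c := cvf r a v with hc
  -- a k = c k - r * c (k+1) on Icc s v
  have ha : ∀ k ∈ Finset.Icc s v, (a k) ^ 2 ≤ 2 * (c k) ^ 2 + 2 * r ^ 2 * (c (k+1)) ^ 2 := by
    intro k hk
    rcases Finset.mem_Icc.1 hk with ⟨h1, h2⟩
    have := cvf_rec (r := r) (a := a) h2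
    rw [← hc] at this
    have hak : a k = c k - r * c (k + 1) := by rw [this]; ring
    rw [hak]
    nlinarith [sq_nonneg (c k + r * c (k+1))]
  have hsum1 : ∑ k ∈ Finset.Icc s v, (a k) ^ 2
      ≤ 2 * (1 + r ^ 2) * ∑ m ∈ Finset.Icc s v, (c m) ^ 2 := by
    calc ∑ k ∈ Finset.Icc s v, (a k) ^ 2
        ≤ ∑ k ∈ Finset.Icc s v, (2 * (c k) ^ 2 + 2 * r ^ 2 * (c (k+1)) ^ 2) :=
          Finset.sum_le_sum ha
      _ = 2 * ∑ k ∈ Finset.Icc s v, (c k) ^ 2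
          + 2 * r ^ 2 * ∑ k ∈ Finset.Icc s v, (c (k+1)) ^ 2 := by
          rw [Finset.sum_add_distrib, Finset.mul_sum, Finset.mul_sum]
      _ ≤ 2 * ∑ k ∈ Finset.Icc s v, (c k) ^ 2
          + 2 * r ^ 2 * ∑ k ∈ Finset.Icc s v, (c k) ^ 2 := by
          have hre : ∑ k ∈ Finset.Icc s v, (c (k+1)) ^ 2
              = ∑ m ∈ Finset.Icc (s+1) (v+1), (c m) ^ 2 := by
            rw [← Finset.map_add_right_Icc s v 1]
            rw [Finset.sum_map]
            rfl
          have hsub : ∑ m ∈ Finset.Icc (s+1) (v+1), (c m) ^ 2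
              ≤ ∑ m ∈ Finset.Icc s v, (c m) ^ 2 := by
            have hzero : c (v+1) = 0 := cvf_of_gt (by omega)
            have hins : Finset.Icc (s+1) (v+1) = insert (v+1) (Finset.Icc (s+1) v) := by
              ext k; simp only [Finset.mem_Icc, Finset.mem_insert]; omega
            rw [hins, Finset.sum_insert (by simp)]
            rw [hzero]
            simp only [ne_eq, OfNat.ofNat_ne_zero, not_false_eq_true, zero_pow, zero_add]
            apply Finset.sum_le_sum_of_subset_of_nonneg
            · intro k hk
              rcases Finset.mem_Icc.1 hk with ⟨h1, h2⟩
              exact Finset.mem_Icc.2 ⟨by omega, h2⟩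
            · intro k _ _
              exact sq_nonneg _
          rw [hre]
          nlinarith [hsub, sq_nonneg r]
      _ = 2 * (1 + r ^ 2) * ∑ m ∈ Finset.Icc s v, (c m) ^ 2 := by ring
  have hsum2 : (1 - r ^ 2) * ∑ m ∈ Finset.Icc s v, (c m) ^ 2 ≤ Qf r a v s := by
    rw [hQ]
    have hins : Finset.Icc s v = insert s (Finset.Icc (s+1) v) := by
      ext k; simp only [Finset.mem_Icc, Finset.mem_insert]; omega
    rw [hins, Finset.sum_insert (by simp)]
    have h1 : (1 - r^2) * (c s) ^ 2 ≤ (c s) ^ 2 := by nlinarith [sq_nonneg (c s), sq_nonneg r]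
    nlinarith [sq_nonneg (c s)]
  have hsumc : 0 ≤ ∑ m ∈ Finset.Icc s v, (c m) ^ 2 :=
    Finset.sum_nonneg (fun m _ => sq_nonneg _)
  rw [div_mul_eq_mul_div, div_le_iff₀ hden]
  nlinarith [hsum1, hsum2, hr2, hsumc]

end ERWaux

namespace ERWaux

lemma icc_union_aux {u v : ℕ} (huv : u ≤ v) :
    Finset.Icc 1 v = Finset.Icc 1 u ∪ Finset.Icc (u+1) v := by
  ext k; simp only [Finset.mem_Icc, Finset.mem_union]; omega

lemma icc_disj_aux (u v : ℕ) : Disjoint (Finset.Icc 1 u) (Finset.Icc (u+1) v) := by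
  rw [Finset.disjoint_left]
  intro k hk hk'
  rcases Finset.mem_Icc.1 hk with ⟨_, h2⟩
  rcases Finset.mem_Icc.1 hk' with ⟨h3, _⟩
  omega

lemma double_split (t : ℕ → ℕ → ℝ) (hsym : ∀ k l, t k l = t l k) {u v : ℕ} (huv : u ≤ v) :
    ∑ k ∈ Finset.Icc 1 v, ∑ l ∈ Finset.Icc 1 v, t k l
      = ((∑ k ∈ Finset.Icc 1 u, ∑ l ∈ Finset.Icc 1 u, t k l)
        + (∑ k ∈ Finset.Icc (u+1) v, ∑ l ∈ Finset.Icc (u+1) v, t k l))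
        + 2 * ∑ k ∈ Finset.Icc 1 u, ∑ l ∈ Finset.Icc (u+1) v, t k l := by
  rw [icc_union_aux huv, Finset.sum_union (icc_disj_aux u v)]
  simp only [Finset.sum_union (icc_disj_aux u v)]
  rw [Finset.sum_add_distrib, Finset.sum_add_distrib]
  have hswap : ∑ k ∈ Finset.Icc (u+1) v, ∑ l ∈ Finset.Icc 1 u, t k l
      = ∑ k ∈ Finset.Icc 1 u, ∑ l ∈ Finset.Icc (u+1) v, t k l := by
    rw [Finset.sum_comm]
    apply Finset.sum_congr rfl
    intro k _
    exact Finset.sum_congr rfl (fun l _ => hsym _ _)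
  rw [hswap]
  ring

lemma Asum_nonneg (a : ℕ → ℝ) (n : ℕ) : 0 ≤ Asum a n :=
  Finset.sum_nonneg (fun k _ => sq_nonneg _)

lemma Asum_mono (a : ℕ → ℝ) {m n : ℕ} (hmn : m ≤ n) : Asum a m ≤ Asum a n := by
  apply Finset.sum_le_sum_of_subset_of_nonneg
  · exact Finset.Icc_subset_Icc_right hmn
  · intro k _ _; exact sq_nonneg _

lemma Asum_diff (a : ℕ → ℝ) {u v : ℕ} (huv : u ≤ v) :
    Asum a v - Asum a u = ∑ k ∈ Finset.Icc (u+1) v, (a k) ^ 2 := by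
  unfold Asum
  rw [icc_union_aux huv, Finset.sum_union (icc_disj_aux u v)]
  ring

lemma Asum_succ (a : ℕ → ℝ) {w : ℕ} (hw : 1 ≤ w) :
    Asum a w = Asum a (w - 1) + (a w) ^ 2 := by
  have h : Asum a w - Asum a (w - 1) = ∑ k ∈ Finset.Icc (w - 1 + 1) w, (a k) ^ 2 :=
    Asum_diff a (by omega)
  rw [show w - 1 + 1 = w by omega] at h
  rw [Finset.Icc_self, Finset.sum_singleton] at h
  linarith

end ERWaux

end

set_option maxHeartbeats 2000000 in
open ERWaux in
/-- **Lemma 6.2.** With the blocking `h` and `B_j = A_{h_j}`, one has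
`(s_{h_{j+1}}² − s_{h_j}²)/σ_j² = 1 + O(B_j^{−δ/4}(log B_j)^{1/2})` and
`s_{h_{M+1}}² − Σ_{j=1}^M σ_j² = O(B_M^{1−δ/8}(log B_M)^{1/2})`. -/
theorem stmt16 {Ω : Type*} [MeasurableSpace Ω] (P : Measure Ω) [IsProbabilityMeasure P]
    (p : ℝ) (hp : p ∈ Set.Ioo (0:ℝ) 1) (hp' : p ≠ 1/2)
    (X : ℕ → Ω → ℝ) (hX : IsERWChain P p X)
    (a : ℕ → ℝ) (δ : ℝ) (hδ : δ ∈ Set.Ioc (0:ℝ) 1)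
    (hA1 : Tendsto (Asum a) atTop atTop)
    (hA2 : (fun n => (a n) ^ 2) =O[atTop] fun n => Asum a n ^ (1 - δ))
    (h : ℕ → ℕ) (hblock : IsBlocking a δ h) :
    ((fun j => (sn2 P a X (h (j + 1)) - sn2 P a X (h j)) / blockVar P a X h j - 1)
        =O[atTop] fun j => Asum a (h j) ^ (-δ/4) * Real.sqrt (Real.log (Asum a (h j)))) ∧
    ((fun M => sn2 P a X (h (M + 1)) - ∑ j ∈ Finset.Icc 1 M, blockVar P a X h j)
        =O[atTop] fun M =>
          Asum a (h M) ^ ((1:ℝ) - δ/8) * Real.sqrt (Real.log (Asum a (h M)))) := by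
  classical
  obtain ⟨hδ0, hδ1⟩ := hδ
  obtain ⟨hp0, hp1⟩ := hp
  set r : ℝ := 2 * p - 1 with hrdef
  have hr : |r| < 1 := by rw [abs_lt]; constructor <;> simp only [hrdef] <;> linarith
  set B : ℕ → ℝ := fun j => Asum a (h j) with hBdef
  -- uniform bound on a n ^ 2
  obtain ⟨K, hK1, hKb⟩ : ∃ K : ℝ, 1 ≤ K ∧ ∀ n, (a n) ^ 2 ≤ K * (Asum a n ^ (1 - δ) + 1) := by
    obtain ⟨C, hCpos, hCb⟩ := hA2.exists_nonneg
    rw [Asymptotics.isBigOWith_iff] at hCb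
    obtain ⟨N, hN⟩ := Filter.eventually_atTop.1 hCb
    set K0 : ℝ := ∑ m ∈ Finset.range N, (a m) ^ 2 with hK0
    refine ⟨max (max C K0) 1, le_max_right _ _, fun n => ?_⟩
    have hrp : (0:ℝ) ≤ Asum a n ^ (1 - δ) := Real.rpow_nonneg (Asum_nonneg a n) _
    have hKpos : (0:ℝ) ≤ max (max C K0) 1 := le_trans zero_le_one (le_max_right _ _)
    rcases le_or_gt N n with hn | hn
    · have := hN n hn
      rw [Real.norm_eq_abs, Real.norm_eq_abs, abs_of_nonneg (sq_nonneg _),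
        abs_of_nonneg hrp] at this
      calc (a n) ^ 2 ≤ C * Asum a n ^ (1 - δ) := this
        _ ≤ max (max C K0) 1 * (Asum a n ^ (1 - δ) + 1) := by
            apply mul_le_mul (le_trans (le_max_left _ _) (le_max_left _ _)) (by linarith)
              hrp hKpos
    · have hmem : n ∈ Finset.range N := Finset.mem_range.2 hn
      have h1 : (a n) ^ 2 ≤ K0 :=
        Finset.single_le_sum (fun m _ => sq_nonneg (a m)) hmem
      calc (a n) ^ 2 ≤ K0 := h1
        _ ≤ max (max C K0) 1 := le_trans (le_max_right _ _) (le_max_left _ _)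
        _ ≤ max (max C K0) 1 * (Asum a n ^ (1 - δ) + 1) := by
            apply le_mul_of_one_le_right hKpos
            linarith
  -- blocking facts
  have hlt : ∀ n, 1 ≤ n → h n < h (n + 1) := fun n hn => (hblock.2 n hn).1.1
  have hgaps : ∀ n, 1 ≤ n → B n ^ (1 - δ/2) ≤ B (n+1) - B n := fun n hn => (hblock.2 n hn).1.2
  have hhmono : ∀ m n, 1 ≤ m → m ≤ n → h m ≤ h n := by
    intro m n h1 hmn
    induction n with
    | zero => omega
    | succ n ih =>
        rcases Nat.lt_or_ge m (n+1) with hc | hc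
        · exact le_trans (ih (by omega)) (le_of_lt (hlt n (by omega)))
        · have : m = n + 1 := by omega
          rw [this]
  have hBmono : ∀ m n, 1 ≤ m → m ≤ n → B m ≤ B n :=
    fun m n h1 hmn => Asum_mono a (hhmono m n h1 hmn)
  have hmin : ∀ n, 1 ≤ n → Asum a (h (n+1) - 1) ≤ B n + B n ^ (1 - δ/2) := by
    intro n hn
    rcases Nat.lt_or_ge (h n + 1) (h (n+1)) with hc | hc
    · -- h (n+1) - 1 > h n, not in the set
      have hnotmem : h (n+1) - 1 ∉ {H : ℕ | h n < H ∧
          Asum a (h n) ^ (1 - δ / 2) ≤ Asum a H - Asum a (h n)} := by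
        intro hmem
        have := (hblock.2 n hn).2 hmem
        omega
      simp only [Set.mem_setOf_eq, not_and, not_le] at hnotmem
      have := hnotmem (by omega)
      simp only [hBdef]
      linarith
    · -- h (n+1) = h n + 1
      have he : h (n+1) - 1 = h n := by have := hlt n hn; omega
      rw [he]
      have : (0:ℝ) ≤ B n ^ (1 - δ/2) := Real.rpow_nonneg (Asum_nonneg a _) _
      simp only [hBdef]
      linarith
  have hhge : ∀ j, 1 ≤ j → j - 1 ≤ h j := by
    intro j hj
    induction j with
    | zero => omega
    | succ j ih =>
        rcases Nat.lt_or_ge j 1 with hc | hc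
        · have : j = 0 := by omega
          subst this
          simp [hblock.1]
        · have := hlt j hc
          have := ih hc
          omega
  have hBtop : Tendsto B atTop atTop := by
    apply tendsto_atTop_mono' atTop
      (show ∀ᶠ j in atTop, Asum a (j - 1) ≤ B j from ?_)
      (hA1.comp (tendsto_sub_atTop_nat 1))
    filter_upwards [eventually_ge_atTop 1] with j hj
    exact Asum_mono a (hhge j hj)
  -- variance and cross identities
  set c₀ : ℝ := (1 - r^2) / (2 * (1 + r^2)) with hc₀
  have hr2 : r ^ 2 < 1 := by nlinarith [abs_nonneg r, sq_abs r, hr]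
  have hc₀pos : 0 < c₀ := by
    apply div_pos (by nlinarith) (by nlinarith [sq_nonneg r])
  set cross : ℕ → ℝ := fun j => ∑ k ∈ Finset.Icc 1 (h j),
      ∑ l ∈ Finset.Icc (h j + 1) (h (j+1)), a k * a l * r ^ (max k l - min k l) with hcross
  have hsn2v : ∀ j, 1 ≤ j → sn2 P a X (h (j+1))
      = sn2 P a X (h j) + blockVar P a X h j + 2 * cross j := by
    intro j hj
    rw [sn2_eq hX ⟨hp0, hp1⟩, sn2_eq hX ⟨hp0, hp1⟩, blockVar_eq hX ⟨hp0, hp1⟩]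
    have hds := double_split (fun k l => a k * a l * rr p k l)
      (fun k l => by
        show a k * a l * rr p k l = a l * a k * rr p l k
        rw [rr_symm, mul_comm (a k) (a l)]) (le_of_lt (hlt j hj))
    rw [hds]
    have : cross j = ∑ k ∈ Finset.Icc 1 (h j),
        ∑ l ∈ Finset.Icc (h j + 1) (h (j+1)), a k * a l * rr p k l := rfl
    rw [this]
  have hQv : ∀ j, blockVar P a X h j = Qf r a (h (j+1)) (h j + 1) := by
    intro j
    rw [blockVar_eq hX ⟨hp0, hp1⟩]
    rfl
  have hvar_lb : ∀ j, 1 ≤ j → c₀ * (B (j+1) - B j) ≤ blockVar P a X h j := by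
    intro j hj
    rw [hQv j]
    have hdiff : B (j+1) - B j = ∑ k ∈ Finset.Icc (h j + 1) (h (j+1)), (a k) ^ 2 := by
      simp only [hBdef]
      exact Asum_diff a (le_of_lt (hlt j hj))
    rw [hdiff, hc₀]
    exact Qf_lower hr a (h (j+1)) (h j + 1)
  set C₁ : ℝ := K * (1 / (1 - |r|)) ^ 2 with hC₁
  have hC₁pos : 0 < C₁ := by
    apply mul_pos (by linarith)
    apply pow_pos
    apply div_pos one_pos
    linarith
  have hcross_b : ∀ j, 1 ≤ j → |cross j| ≤ C₁ * (B (j+1) ^ (1 - δ) + 1) := by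
    intro j hj
    have hKB : (0:ℝ) < K * (B (j+1) ^ (1 - δ) + 1) := by
      have := Real.rpow_nonneg (Asum_nonneg a (h (j+1))) (1 - δ)
      simp only [hBdef]
      nlinarith
    have ham : ∀ k ∈ Finset.Icc 1 (h (j+1)), |a k| ≤ Real.sqrt (K * (B (j+1) ^ (1 - δ) + 1)) := by
      intro k hk
      rcases Finset.mem_Icc.1 hk with ⟨hk1, hk2⟩
      have h1 : (a k) ^ 2 ≤ K * (B (j+1) ^ (1 - δ) + 1) := by
        refine le_trans (hKb k) ?_
        have h2 : Asum a k ^ (1 - δ) ≤ B (j+1) ^ (1 - δ) := by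
          simp only [hBdef]
          exact Real.rpow_le_rpow (Asum_nonneg a k) (Asum_mono a hk2) (by linarith)
        nlinarith
      calc |a k| = Real.sqrt ((a k) ^ 2) := (Real.sqrt_sq_eq_abs _).symm
        _ ≤ Real.sqrt (K * (B (j+1) ^ (1 - δ) + 1)) := Real.sqrt_le_sqrt h1
    have hb := cross_abs_le hr a (h j) (h (j+1))
      (Real.sqrt (K * (B (j+1) ^ (1 - δ) + 1))) (Real.sqrt_nonneg _) ham
      (le_of_lt (hlt j hj))
    have he : (Real.sqrt (K * (B (j+1) ^ (1 - δ) + 1)) * (1 / (1 - |r|))) ^ 2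
        = C₁ * (B (j+1) ^ (1 - δ) + 1) := by
      rw [mul_pow, Real.sq_sqrt hKB.le, hC₁]
      ring
    rw [he] at hb
    exact hb
  -- eventual smallness of K * (x^(1-δ)+1) compared to x/2
  have hev2 : ∀ᶠ x : ℝ in atTop, K * (x ^ (1 - δ) + 1) ≤ x / 2 := by
    have h1 : Tendsto (fun x : ℝ => x ^ (-δ)) atTop (nhds 0) := tendsto_rpow_neg_atTop hδ0
    have h2 : ∀ᶠ x : ℝ in atTop, x ^ (-δ) < 1 / (4 * K) :=
      h1.eventually_lt_const (by positivity)
    filter_upwards [h2, eventually_ge_atTop (4 * K), eventually_gt_atTop (0:ℝ)]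
      with x hx1 hx2 hx3
    have hsplit : x ^ (1 - δ) = x * x ^ (-δ) := by
      rw [show (1:ℝ) - δ = 1 + -δ by ring, Real.rpow_add hx3, Real.rpow_one]
    have hxd : 0 ≤ x ^ (-δ) := Real.rpow_nonneg hx3.le _
    have hKx : K * (x * x ^ (-δ)) ≤ K * (x * (1 / (4 * K))) := by
      apply mul_le_mul_of_nonneg_left _ (by linarith)
      exact mul_le_mul_of_nonneg_left hx1.le hx3.le
    have hKK : K * (x * (1 / (4 * K))) = x / 4 := by
      field_simp
    rw [hsplit]
    nlinarith
  -- the global index threshold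
  obtain ⟨J, hJ⟩ := Filter.eventually_atTop.1
    ((hBtop.eventually hev2).and ((hBtop.eventually_ge_atTop 1).and
      ((hBtop.eventually_ge_atTop (Real.exp 1)).and (eventually_ge_atTop 1))))
  have hB4 : ∀ j, J ≤ j → B (j+1) ≤ 4 * B j := by
    intro j hj
    obtain ⟨hhalf, hB1, hBe, hj1⟩ := hJ j hj
    obtain ⟨hhalf', hB1', hBe', hj1'⟩ := hJ (j+1) (by omega)
    have hw : 1 ≤ h (j+1) := by have := hlt j hj1; omega
    have e1 : B (j+1) = Asum a (h (j+1) - 1) + a (h (j+1)) ^ 2 := by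
      simp only [hBdef]
      exact Asum_succ a hw
    have e2 : a (h (j+1)) ^ 2 ≤ B (j+1) / 2 := by
      refine le_trans (hKb (h (j+1))) ?_
      exact hhalf'
    have e3 : Asum a (h (j+1) - 1) ≤ 2 * B j := by
      refine le_trans (hmin j hj1) ?_
      have : B j ^ (1 - δ/2) ≤ B j ^ (1:ℝ) :=
        Real.rpow_le_rpow_of_exponent_le hB1 (by linarith)
      rw [Real.rpow_one] at this
      linarith
    linarith
  constructor
  · -- Part 1
    rw [Asymptotics.isBigO_iff]
    refine ⟨10 * C₁ / c₀, ?_⟩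
    filter_upwards [eventually_ge_atTop J] with j hj
    obtain ⟨hhalf, hB1, hBe, hj1⟩ := hJ j hj
    have hBpos : (0:ℝ) < B j := lt_of_lt_of_le one_pos hB1
    -- numerator bound
    have hB1d : B (j+1) ^ (1 - δ) ≤ 4 * B j ^ (1 - δ) := by
      calc B (j+1) ^ (1 - δ) ≤ (4 * B j) ^ (1 - δ) :=
            Real.rpow_le_rpow (Asum_nonneg a _) (hB4 j hj) (by linarith)
        _ = (4:ℝ) ^ (1 - δ) * B j ^ (1 - δ) :=
            Real.mul_rpow (by norm_num) hBpos.le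
        _ ≤ 4 * B j ^ (1 - δ) := by
            have h4 : (4:ℝ) ^ (1 - δ) ≤ (4:ℝ) ^ (1:ℝ) :=
              Real.rpow_le_rpow_of_exponent_le (by norm_num) (by linarith)
            rw [Real.rpow_one] at h4
            exact mul_le_mul_of_nonneg_right h4 (Real.rpow_nonneg hBpos.le _)
    have hone : (1:ℝ) ≤ B j ^ (1 - δ) := Real.one_le_rpow hB1 (by linarith)
    have hnum : |2 * cross j| ≤ 10 * C₁ * B j ^ (1 - δ) := by
      rw [abs_mul, abs_two]
      have := hcross_b j hj1
      nlinarith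
    -- denominator bound
    have hden : c₀ * B j ^ (1 - δ/2) ≤ blockVar P a X h j := by
      refine le_trans ?_ (hvar_lb j hj1)
      exact mul_le_mul_of_nonneg_left (hgaps j hj1) hc₀pos.le
    have hdenpos : (0:ℝ) < blockVar P a X h j :=
      lt_of_lt_of_le (mul_pos hc₀pos (Real.rpow_pos_of_pos hBpos _)) hden
    -- the quotient
    have hquot : (sn2 P a X (h (j+1)) - sn2 P a X (h j)) / blockVar P a X h j - 1
        = 2 * cross j / blockVar P a X h j := by
      have hd : sn2 P a X (h (j+1)) - sn2 P a X (h j)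
          = blockVar P a X h j + 2 * cross j := by
        rw [hsn2v j hj1]; ring
      rw [hd]
      field_simp
      ring
    rw [Real.norm_eq_abs, hquot, abs_div, abs_of_pos hdenpos]
    have step1 : |2 * cross j| / blockVar P a X h j
        ≤ 10 * C₁ * B j ^ (1 - δ) / (c₀ * B j ^ (1 - δ/2)) := by
      apply div_le_div₀ (by positivity) hnum
        (mul_pos hc₀pos (Real.rpow_pos_of_pos hBpos _)) hden
    have step2 : 10 * C₁ * B j ^ (1 - δ) / (c₀ * B j ^ (1 - δ/2))
        = (10 * C₁ / c₀) * (B j ^ (-δ/4) * B j ^ (-δ/4)) := by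
      rw [mul_div_mul_comm, ← Real.rpow_sub hBpos,
        show (1 - δ) - (1 - δ/2) = -δ/4 + -δ/4 by ring, Real.rpow_add hBpos]
    have hsq : (1:ℝ) ≤ Real.sqrt (Real.log (B j)) := by
      rw [Real.one_le_sqrt]
      rw [Real.le_log_iff_exp_le hBpos]
      exact hBe
    have step3 : B j ^ (-δ/4) * B j ^ (-δ/4) ≤ B j ^ (-δ/4) * Real.sqrt (Real.log (B j)) := by
      apply mul_le_mul_of_nonneg_left _ (Real.rpow_nonneg hBpos.le _)
      refine le_trans ?_ hsq
      exact Real.rpow_le_one_of_one_le_of_nonpos hB1 (by linarith)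
    have hrhs : ‖B j ^ (-δ/4) * Real.sqrt (Real.log (B j))‖
        = B j ^ (-δ/4) * Real.sqrt (Real.log (B j)) := by
      rw [Real.norm_eq_abs, abs_of_nonneg]
      positivity
    rw [hrhs]
    calc |2 * cross j| / blockVar P a X h j
        ≤ (10 * C₁ / c₀) * (B j ^ (-δ/4) * B j ^ (-δ/4)) := by rw [← step2]; exact step1
      _ ≤ (10 * C₁ / c₀) * (B j ^ (-δ/4) * Real.sqrt (Real.log (B j))) := by
          apply mul_le_mul_of_nonneg_left step3 (by positivity)
  · -- Part 2
    have htel : ∀ M, sn2 P a X (h (M+1))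
        = ∑ j ∈ Finset.Icc 1 M, (blockVar P a X h j + 2 * cross j) := by
      intro M
      induction M with
      | zero =>
          rw [hblock.1]
          simp only [Finset.Icc_eq_empty (by omega : ¬ (1:ℕ) ≤ 0), Finset.sum_empty]
          have : ∀ ω, Swalk a X 0 ω = 0 := by
            intro ω
            unfold Swalk
            rw [Finset.Icc_eq_empty (by omega : ¬ (1:ℕ) ≤ 0), Finset.sum_empty]
          simp only [sn2]
          rw [integral_congr_ae (ae_of_all _ (fun ω => by rw [this ω]))]
          simp
      | succ M ih =>
          rw [hsn2v (M+1) (by omega), ih]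
          have hins : Finset.Icc 1 (M+1) = insert (M+1) (Finset.Icc 1 M) := by
            ext k; simp only [Finset.mem_Icc, Finset.mem_insert]; omega
          rw [hins, Finset.sum_insert (by simp)]
          ring
    have hTs : ∀ M, sn2 P a X (h (M+1)) - ∑ j ∈ Finset.Icc 1 M, blockVar P a X h j
        = ∑ j ∈ Finset.Icc 1 M, 2 * cross j := by
      intro M
      rw [htel M, Finset.sum_add_distrib]
      ring
    rw [Asymptotics.isBigO_iff]
    refine ⟨80 * C₁ / δ, ?_⟩
    have hJ1 : 1 ≤ J := (hJ J le_rfl).2.2.2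
    filter_upwards [eventually_ge_atTop J, hBtop.eventually_ge_atTop (Real.exp J)]
      with M hM hBeJ
    obtain ⟨hhalfM, hBM1, hBMe, hM1⟩ := hJ M hM
    have hBMpos : (0:ℝ) < B M := lt_of_lt_of_le one_pos hBM1
    have hlogBM : (1:ℝ) ≤ Real.log (B M) := by
      rw [Real.le_log_iff_exp_le hBMpos]
      exact hBMe
    -- bound on the sum of crosses
    have hB1dM : B (M+1) ^ (1 - δ) ≤ 4 * B M ^ (1 - δ) := by
      calc B (M+1) ^ (1 - δ) ≤ (4 * B M) ^ (1 - δ) :=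
            Real.rpow_le_rpow (Asum_nonneg a _) (hB4 M hM) (by linarith)
        _ = (4:ℝ) ^ (1 - δ) * B M ^ (1 - δ) :=
            Real.mul_rpow (by norm_num) hBMpos.le
        _ ≤ 4 * B M ^ (1 - δ) := by
            have h4 : (4:ℝ) ^ (1 - δ) ≤ (4:ℝ) ^ (1:ℝ) :=
              Real.rpow_le_rpow_of_exponent_le (by norm_num) (by linarith)
            rw [Real.rpow_one] at h4
            exact mul_le_mul_of_nonneg_right h4 (Real.rpow_nonneg hBMpos.le _)
    have honeM : (1:ℝ) ≤ B M ^ (1 - δ) := Real.one_le_rpow hBM1 (by linarith)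
    have hterm : ∀ j ∈ Finset.Icc 1 M, |2 * cross j| ≤ 10 * C₁ * B M ^ (1 - δ) := by
      intro j hjm
      rcases Finset.mem_Icc.1 hjm with ⟨hj1, hjM⟩
      have h1 := hcross_b j hj1
      have h2 : B (j+1) ^ (1 - δ) ≤ B (M+1) ^ (1 - δ) :=
        Real.rpow_le_rpow (Asum_nonneg a _) (hBmono (j+1) (M+1) (by omega) (by omega))
          (by linarith)
      rw [abs_mul, abs_two]
      have h3 : B (j+1) ^ (1 - δ) + 1 ≤ 5 * B M ^ (1 - δ) := by linarith
      have h4 := mul_le_mul_of_nonneg_left h3 (le_of_lt hC₁pos)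
      linarith
    have hsum1 : |∑ j ∈ Finset.Icc 1 M, 2 * cross j|
        ≤ (M : ℝ) * (10 * C₁ * B M ^ (1 - δ)) := by
      calc |∑ j ∈ Finset.Icc 1 M, 2 * cross j|
          ≤ ∑ j ∈ Finset.Icc 1 M, |2 * cross j| := Finset.abs_sum_le_sum_abs _ _
        _ ≤ ∑ _j ∈ Finset.Icc 1 M, 10 * C₁ * B M ^ (1 - δ) :=
            Finset.sum_le_sum hterm
        _ = (M : ℝ) * (10 * C₁ * B M ^ (1 - δ)) := by
            rw [Finset.sum_const, Nat.card_Icc, nsmul_eq_mul]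
            norm_num
    -- geometric growth count : M ≤ 3 * B M ^ (δ/2) * log (B M)
    set x : ℝ := B M ^ (-(δ/2)) with hx
    have hxpos : 0 < x := Real.rpow_pos_of_pos hBMpos _
    have hx1 : x ≤ 1 := Real.rpow_le_one_of_one_le_of_nonpos hBM1 (by linarith)
    set q : ℝ := 1 + x with hq
    have hqpos : (0:ℝ) < q := by simp only [hq]; linarith
    have hgeo : ∀ jj, J ≤ jj → jj ≤ M → B J * q ^ (jj - J) ≤ B jj := by
      intro jj hJj
      induction jj, hJj using Nat.le_induction with
      | base =>
          intro _
          simp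
      | succ n hn ih =>
          intro hn1M
          have hnM : n ≤ M := by omega
          have ihn := ih hnM
          have hn1 : 1 ≤ n := le_trans hJ1 hn
          have hBn1 : (1:ℝ) ≤ B n := (hJ n hn).2.1
          have hBnpos : (0:ℝ) < B n := lt_of_lt_of_le one_pos hBn1
          have hsplit : B n ^ (1 - δ/2) = B n * B n ^ (-(δ/2)) := by
            rw [show (1:ℝ) - δ/2 = 1 + -(δ/2) by ring, Real.rpow_add hBnpos,
              Real.rpow_one]
          have hqn : q ≤ 1 + B n ^ (-(δ/2)) := by
            simp only [hq, hx]
            have := Real.rpow_le_rpow_of_nonpos hBnpos (hBmono n M hn1 hnM)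
              (by linarith : -(δ/2) ≤ (0:ℝ))
            linarith
          have hstep : B n * q ≤ B (n+1) := by
            have h1 := hgaps n hn1
            rw [hsplit] at h1
            have h2 : B n * q ≤ B n * (1 + B n ^ (-(δ/2))) :=
              mul_le_mul_of_nonneg_left hqn hBnpos.le
            nlinarith
          calc B J * q ^ (n + 1 - J) = (B J * q ^ (n - J)) * q := by
                rw [show n + 1 - J = (n - J) + 1 by omega, pow_succ]
                ring
            _ ≤ B n * q := mul_le_mul_of_nonneg_right ihn hqpos.le
            _ ≤ B (n+1) := hstep
    have hBJ1 : (1:ℝ) ≤ B J := (hJ J le_rfl).2.1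
    have hqB : q ^ (M - J) ≤ B M := by
      have h1 := hgeo M hM le_rfl
      have h2 : q ^ (M - J) ≤ B J * q ^ (M - J) := by
        nlinarith [pow_nonneg hqpos.le (M - J), pow_pos hqpos (M - J)]
      linarith
    have hlogq : ((M - J : ℕ) : ℝ) * Real.log q ≤ Real.log (B M) := by
      rw [← Real.log_pow]
      exact Real.log_le_log (pow_pos hqpos _) hqB
    have hlogq_lb : x / 2 ≤ Real.log q := by
      have hpos : (0:ℝ) < 1 + x := by linarith
      have h1 : Real.log ((1+x)⁻¹) ≤ (1+x)⁻¹ - 1 :=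
        Real.log_le_sub_one_of_pos (by positivity)
      rw [Real.log_inv] at h1
      have hinv : (1+x) * (1+x)⁻¹ = 1 := mul_inv_cancel₀ (ne_of_gt hpos)
      simp only [hq]
      nlinarith
    have hxinv : x * B M ^ (δ/2) = 1 := by
      rw [hx, ← Real.rpow_add hBMpos]
      norm_num
    have hcount : (M : ℝ) ≤ 3 * (B M ^ (δ/2) * Real.log (B M)) := by
      have h1 : ((M - J : ℕ) : ℝ) * (x/2) ≤ Real.log (B M) := by
        calc ((M - J : ℕ) : ℝ) * (x/2) ≤ ((M - J : ℕ) : ℝ) * Real.log q :=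
              mul_le_mul_of_nonneg_left hlogq_lb (by positivity)
          _ ≤ Real.log (B M) := hlogq
      have hcast : ((M - J : ℕ) : ℝ) = (M : ℝ) - (J : ℝ) := by
        rw [Nat.cast_sub hM]
      rw [hcast] at h1
      have hBd2 : (1:ℝ) ≤ B M ^ (δ/2) := Real.one_le_rpow hBM1 (by linarith)
      have h2 : (M : ℝ) - (J : ℝ) ≤ 2 * (B M ^ (δ/2) * Real.log (B M)) := by
        nlinarith [Real.rpow_pos_of_pos hBMpos (δ/2)]
      have h3 : (J : ℝ) ≤ Real.log (B M) := by
        rw [Real.le_log_iff_exp_le hBMpos]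
        exact hBeJ
      have h4 : (J : ℝ) ≤ B M ^ (δ/2) * Real.log (B M) := by
        nlinarith [Real.log_nonneg hBM1]
      linarith
    -- final assembly
    have hfin1 : |∑ j ∈ Finset.Icc 1 M, 2 * cross j|
        ≤ 30 * C₁ * (Real.log (B M) * B M ^ (1 - δ/2)) := by
      have hmul : (M : ℝ) * (10 * C₁ * B M ^ (1 - δ))
          ≤ (3 * (B M ^ (δ/2) * Real.log (B M))) * (10 * C₁ * B M ^ (1 - δ)) := by
        apply mul_le_mul_of_nonneg_right hcount
        positivity
      have hexp : B M ^ (δ/2) * B M ^ (1 - δ) = B M ^ (1 - δ/2) := by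
        rw [← Real.rpow_add hBMpos]
        congr 1
        ring
      calc |∑ j ∈ Finset.Icc 1 M, 2 * cross j|
          ≤ (M : ℝ) * (10 * C₁ * B M ^ (1 - δ)) := hsum1
        _ ≤ (3 * (B M ^ (δ/2) * Real.log (B M))) * (10 * C₁ * B M ^ (1 - δ)) := hmul
        _ = 30 * C₁ * (Real.log (B M) * (B M ^ (δ/2) * B M ^ (1 - δ))) := by ring
        _ = 30 * C₁ * (Real.log (B M) * B M ^ (1 - δ/2)) := by rw [hexp]
    have hlogle : Real.log (B M) ≤ B M ^ (3*δ/8) / (3*δ/8) :=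
      Real.log_le_rpow_div hBMpos.le (by linarith)
    have hexp2 : B M ^ (3*δ/8) * B M ^ (1 - δ/2) = B M ^ ((1:ℝ) - δ/8) := by
      rw [← Real.rpow_add hBMpos]
      congr 1
      ring
    have hfin2 : 30 * C₁ * (Real.log (B M) * B M ^ (1 - δ/2))
        ≤ (80 * C₁ / δ) * B M ^ ((1:ℝ) - δ/8) := by
      have h1 : Real.log (B M) * B M ^ (1 - δ/2)
          ≤ (B M ^ (3*δ/8) / (3*δ/8)) * B M ^ (1 - δ/2) :=
        mul_le_mul_of_nonneg_right hlogle (Real.rpow_nonneg hBMpos.le _)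
      have h2 : (B M ^ (3*δ/8) / (3*δ/8)) * B M ^ (1 - δ/2)
          = (8/(3*δ)) * B M ^ ((1:ℝ) - δ/8) := by
        rw [div_mul_eq_mul_div, hexp2]
        field_simp
      rw [h2] at h1
      have h3 : 30 * C₁ * ((8/(3*δ)) * B M ^ ((1:ℝ) - δ/8))
          = (80 * C₁ / δ) * B M ^ ((1:ℝ) - δ/8) := by
        field_simp
        ring
      nlinarith [Real.rpow_nonneg hBMpos.le ((1:ℝ) - δ/8), hC₁pos]
    have hsqM : (1:ℝ) ≤ Real.sqrt (Real.log (B M)) := by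
      rw [Real.one_le_sqrt]
      exact hlogBM
    rw [Real.norm_eq_abs, Real.norm_eq_abs, hTs M]
    have hrhs : |B M ^ ((1:ℝ) - δ/8) * Real.sqrt (Real.log (B M))|
        = B M ^ ((1:ℝ) - δ/8) * Real.sqrt (Real.log (B M)) := by
      rw [abs_of_nonneg]
      positivity
    rw [hrhs]
    have hC80 : (0:ℝ) ≤ 80 * C₁ / δ := by positivity
    calc |∑ j ∈ Finset.Icc 1 M, 2 * cross j|
        ≤ (80 * C₁ / δ) * B M ^ ((1:ℝ) - δ/8) := le_trans hfin1 hfin2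
      _ ≤ (80 * C₁ / δ) * (B M ^ ((1:ℝ) - δ/8) * Real.sqrt (Real.log (B M))) := by
          have hnn : (0:ℝ) ≤ (80 * C₁ / δ) * B M ^ ((1:ℝ) - δ/8) := by positivity
          nlinarith [mul_nonneg hnn (sub_nonneg.2 hsqM)]
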